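/- arXiv:2209.13034 — 2 statements merged into one kernel-verified Lean document; each statement's English description precedes it below -/
import Mathlib

section
/- Let G=(V,E) be a hypergraph, let e_0 ∈ E, let T be a finite index set of distinct edges e_k ∈ E \ {e_0} (k ∈ T) adjacent to e_0, and let i ∈ T be such that (e_0 ∩ e_i) \ ∪_{j∈T\{i}} (e_0 ∩ e_j) = {v̄} for a single vertex v̄. If a point z ∈ ℝ^{V∪E} satisfies z_{e_i} ≤ z_{v̄} and the extended flower inequality centered at e_0 with neighbors e_k, k ∈ T \ {i}, then z satisfies the extended flower inequality centered at e_0 with neighbors e_k, k ∈ T. -/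
open Finset

/-- A hypergraph: a finite set of nodes together with a set of edges,
each a subset of the nodes of cardinality at least two. -/
structure Hypergraph' (α : Type*) [DecidableEq α] where
  V : Finset α
  E : Finset (Finset α)
  edge_sub : ∀ e ∈ E, e ⊆ V
  edge_card : ∀ e ∈ E, 2 ≤ e.card

section Defs

variable {α : Type*} [DecidableEq α]

/-- Membership in the multilinear set `S_G`; a point is encoded as a single function
`z : Finset α → ℝ`, with node variables `z {v}` and edge variables `z e`. -/
def MultilinearSet (G : Hypergraph' α) (z : Finset α → ℝ) : Prop :=
  (∀ v ∈ G.V, z {v} = 0 ∨ z {v} = 1) ∧ ∀ e ∈ G.E, z e = ∏ v ∈ e, z {v}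

/-- Membership in the standard linearization `MP^LP_G`. -/
def StdLin (G : Hypergraph' α) (z : Finset α → ℝ) : Prop :=
  (∀ v ∈ G.V, z {v} ≤ 1) ∧
    ∀ e ∈ G.E, 0 ≤ z e ∧ (∑ v ∈ e, z {v}) - (e.card : ℝ) + 1 ≤ z e ∧ ∀ v ∈ e, z e ≤ z {v}

/-- The (extended) flower inequality centered at `e₀` with set of neighbors `T`. -/
def ExtFlowerIneq (z : Finset α → ℝ) (e₀ : Finset α) (T : Finset (Finset α)) : Prop :=
  (∑ v ∈ e₀ \ T.biUnion id, z {v}) + (∑ e ∈ T, z e) - z e₀ ≤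
    ((e₀ \ T.biUnion id).card : ℝ) + (T.card : ℝ) - 1

/-- `T` is a valid set of neighbors for an extended flower inequality centered at `e₀`:
a nonempty set of edges, distinct from `e₀`, adjacent to `e₀`, with `γ_i ≥ 2` for all `i ∈ T`. -/
def ValidEFNeighbors (G : Hypergraph' α) (e₀ : Finset α) (T : Finset (Finset α)) : Prop :=
  T.Nonempty ∧ (∀ e ∈ T, e ∈ G.E ∧ e ≠ e₀ ∧ (e ∩ e₀).Nonempty) ∧
    ∀ i ∈ T, 2 ≤ ((e₀ ∩ i) \ (T.erase i).biUnion (fun j => e₀ ∩ j)).card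

/-- Membership in the extended flower relaxation `MP^EF_G`. -/
def MPEF (G : Hypergraph' α) (z : Finset α → ℝ) : Prop :=
  StdLin G z ∧ ∀ e₀ ∈ G.E, ∀ T : Finset (Finset α), ValidEFNeighbors G e₀ T → ExtFlowerIneq z e₀ T

/-- `T` is a valid set of neighbors for a flower inequality centered at `e₀`. -/
def ValidFlowerNeighbors (G : Hypergraph' α) (e₀ : Finset α) (T : Finset (Finset α)) : Prop :=
  T.Nonempty ∧ (∀ e ∈ T, e ∈ G.E ∧ e ≠ e₀ ∧ 2 ≤ (e₀ ∩ e).card) ∧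
    ∀ i ∈ T, ∀ j ∈ T, i ≠ j → e₀ ∩ i ∩ j = ∅

/-- Membership in the flower relaxation `MP^F_G`. -/
def MPF (G : Hypergraph' α) (z : Finset α → ℝ) : Prop :=
  StdLin G z ∧ ∀ e₀ ∈ G.E, ∀ T : Finset (Finset α), ValidFlowerNeighbors G e₀ T → ExtFlowerIneq z e₀ T

/-- A recursive McCormick relaxation (RMC) of the multilinear set `S_G`:
a set `Ebar` of artificial edges together with, for each `f ∈ E ∪ Ebar`,
a partition `f = J f ∪ K f` into two disjoint nonempty parts, each a singleton
or an element of `E ∪ Ebar`, such that every artificial edge is reachable from some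
edge of `E` by iteratively passing to non-singleton parts. -/
structure RMC {α : Type*} [DecidableEq α] (G : Hypergraph' α) where
  Ebar : Finset (Finset α)
  ebar_sub : ∀ f ∈ Ebar, f ⊆ G.V
  ebar_card : ∀ f ∈ Ebar, 2 ≤ f.card
  ebar_new : ∀ f ∈ Ebar, f ∉ G.E
  J : Finset α → Finset α
  K : Finset α → Finset α
  union_eq : ∀ f ∈ G.E ∪ Ebar, J f ∪ K f = f
  disj : ∀ f ∈ G.E ∪ Ebar, Disjoint (J f) (K f)
  J_ne : ∀ f ∈ G.E ∪ Ebar, (J f).Nonempty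
  K_ne : ∀ f ∈ G.E ∪ Ebar, (K f).Nonempty
  J_mem : ∀ f ∈ G.E ∪ Ebar, (J f).card = 1 ∨ J f ∈ G.E ∪ Ebar
  K_mem : ∀ f ∈ G.E ∪ Ebar, (K f).card = 1 ∨ K f ∈ G.E ∪ Ebar
  reach : ∀ f ∈ Ebar, ∃ e ∈ G.E, Relation.ReflTransGen
    (fun a b => a ∈ G.E ∪ Ebar ∧ 2 ≤ b.card ∧ (b = J a ∨ b = K a)) e f

/-- One step of the recursive decomposition: passing from `a` to a non-singleton part of it. -/
def RMC.step {α : Type*} [DecidableEq α] {G : Hypergraph' α} (M : RMC G) (a b : Finset α) : Prop :=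
  a ∈ G.E ∪ M.Ebar ∧ 2 ≤ b.card ∧ (b = M.J a ∨ b = M.K a)

/-- The recursive sequence `R_e` of `e`: all sets obtained from `e` by iteratively
passing to non-singleton parts of the partitions (with `e ∈ R_e`). -/
def RMC.Rseq {α : Type*} [DecidableEq α] {G : Hypergraph' α} (M : RMC G) (e : Finset α) :
    Set (Finset α) :=
  {f | Relation.ReflTransGen M.step e f}

/-- The RMC is non-overlapping if the recursive sequences of distinct edges are disjoint. -/
def RMC.NonOverlapping {α : Type*} [DecidableEq α] {G : Hypergraph' α} (M : RMC G) : Prop :=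
  ∀ e ∈ G.E, ∀ e' ∈ G.E, e ≠ e' → M.Rseq e ∩ M.Rseq e' = ∅

/-- The point `w` (including artificial coordinates) satisfies all McCormick
inequalities of the RMC. -/
def RMC.McCormick {α : Type*} [DecidableEq α] {G : Hypergraph' α} (M : RMC G)
    (w : Finset α → ℝ) : Prop :=
  ∀ f ∈ G.E ∪ M.Ebar,
    0 ≤ w f ∧ w (M.J f) + w (M.K f) - 1 ≤ w f ∧ w f ≤ w (M.J f) ∧ w f ≤ w (M.K f)

/-- Membership in `MP^RMC_G`, the projection of the RMC polytope onto the coordinates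
indexed by `V ∪ E`: the point `z` admits an extension to the artificial variables
satisfying all McCormick inequalities of the RMC. -/
def RMC.MPRMC {α : Type*} [DecidableEq α] {G : Hypergraph' α} (M : RMC G)
    (z : Finset α → ℝ) : Prop :=
  ∃ w : Finset α → ℝ, (∀ v ∈ G.V, w {v} = z {v}) ∧ (∀ e ∈ G.E, w e = z e) ∧ M.McCormick w

/-- A flower partition `Te` of the edge `e`: a partition of `e` into pairwise disjoint
nonempty parts, each a singleton subset of `e` or an element of `R_e`, such that every
part lying in `Ebar` belongs to the recursive sequence of some other original edge. -/
def RMC.FlowerPartition {α : Type*} [DecidableEq α] {G : Hypergraph' α} (M : RMC G)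
    (e : Finset α) (Te : Finset (Finset α)) : Prop :=
  (∀ p ∈ Te, p.Nonempty) ∧
  (∀ p ∈ Te, ∀ q ∈ Te, p ≠ q → Disjoint p q) ∧
  Te.biUnion id = e ∧
  (∀ p ∈ Te, (p.card = 1 ∧ p ⊆ e) ∨ p ∈ M.Rseq e) ∧
  ∀ p ∈ Te, p ∈ M.Ebar → ∃ e' ∈ G.E, e' ≠ e ∧ p ∈ M.Rseq e'

/-- The McCormick system for the bilinear equation `w = u * v` over the unit hypercube. -/
def McSys (u v w : ℝ) : Prop := 0 ≤ w ∧ u + v - 1 ≤ w ∧ w ≤ u ∧ w ≤ v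

end Defs


/-- if `γ_i = 1` for some `i ∈ T`, with private vertex `vbar`, then the extended
flower inequality with neighbors `T` is implied by `z_{e_i} ≤ z_{vbar}` together with the
extended flower inequality with neighbors `T \ {i}`. -/
theorem extended_flower_gamma_one {α : Type*} [DecidableEq α]
    (G : Hypergraph' α) (e₀ : Finset α) (he₀ : e₀ ∈ G.E)
    (T : Finset (Finset α))
    (hTE : ∀ e ∈ T, e ∈ G.E ∧ e ≠ e₀)
    (hadj : ∀ e ∈ T, (e ∩ e₀).Nonempty)
    (i : Finset α) (hi : i ∈ T) (vbar : α)
    (hγ : (e₀ ∩ i) \ (T.erase i).biUnion (fun j => e₀ ∩ j) = {vbar})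
    (z : Finset α → ℝ) (hzi : z i ≤ z {vbar})
    (hEF : ExtFlowerIneq z e₀ (T.erase i)) :
    ExtFlowerIneq z e₀ T := by
  classical
  have hT : insert i (T.erase i) = T := insert_erase hi
  have hvmem : vbar ∈ (e₀ ∩ i) \ (T.erase i).biUnion (fun j => e₀ ∩ j) := by
    rw [hγ]; exact mem_singleton_self _
  rw [mem_sdiff, mem_inter] at hvmem
  obtain ⟨⟨hv0, hvi⟩, hvU⟩ := hvmem
  have hB : e₀ \ (T.erase i).biUnion id = insert vbar (e₀ \ T.biUnion id) := by
    ext x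
    simp only [mem_sdiff, mem_biUnion, mem_insert, id_eq, not_exists, not_and]
    constructor
    · rintro ⟨hx0, hxU⟩
      by_cases hxi : x ∈ i
      · left
        have hx : x ∈ (e₀ ∩ i) \ (T.erase i).biUnion (fun j => e₀ ∩ j) := by
          rw [mem_sdiff, mem_inter]
          refine ⟨⟨hx0, hxi⟩, ?_⟩
          rw [mem_biUnion]
          rintro ⟨j, hj, hxj⟩
          exact hxU j hj (mem_inter.mp hxj).2
        rw [hγ] at hx
        exact mem_singleton.mp hx
      · right
        refine ⟨hx0, fun j hj => ?_⟩
        rcases eq_or_ne j i with rfl | hne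
        · exact hxi
        · exact hxU j (mem_erase.mpr ⟨hne, hj⟩)
    · rintro (rfl | ⟨hx0, hxT⟩)
      · refine ⟨hv0, fun j hj hvj => ?_⟩
        rw [mem_biUnion] at hvU
        exact hvU ⟨j, hj, mem_inter.mpr ⟨hv0, hvj⟩⟩
      · exact ⟨hx0, fun j hj => hxT j (mem_of_mem_erase hj)⟩
  have hvA : vbar ∉ e₀ \ T.biUnion id := by
    rw [mem_sdiff]
    rintro ⟨_, hvb⟩
    exact hvb (mem_biUnion.mpr ⟨i, hi, hvi⟩)
  have hiE : i ∉ T.erase i := notMem_erase i T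
  unfold ExtFlowerIneq at hEF ⊢
  rw [hB, sum_insert hvA, card_insert_of_notMem hvA] at hEF
  have hsum : ∑ e ∈ T, z e = z i + ∑ e ∈ T.erase i, z e :=
    (Finset.add_sum_erase T z hi).symm
  have hc : (T.erase i).card + 1 = T.card := card_erase_add_one hi
  rw [hsum, ← hc]
  push_cast at hEF ⊢
  linarith
end

section
/- Let G=(V,E) be a hypergraph and consider any recursive McCormick relaxation of the multilinear set S_G. Then MP^EF_G ⊆ MP^RMC_G; that is, every point of the extended flower relaxation admits an extension to the artificial variables satisfying all McCormick inequalities of the RMC. -/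
open Finset

section ProofAux

variable {α : Type*} [DecidableEq α]

/-- The value of a "certificate" `(S, T)`. -/
noncomputable def certVal (z : Finset α → ℝ) (S : Finset α) (T : Finset (Finset α)) : ℝ :=
  (∑ v ∈ S, z {v}) + (∑ e ∈ T, z e) - (S.card : ℝ) - (T.card : ℝ) + 1

lemma edge_le_one {G : Hypergraph' α} {z : Finset α → ℝ} (hz : StdLin G z)
    {e : Finset α} (he : e ∈ G.E) : z e ≤ 1 := by
  obtain ⟨v, hv⟩ : e.Nonempty := Finset.card_pos.mp (by have := G.edge_card e he; omega)
  exact le_trans ((hz.2 e he).2.2 v hv) (hz.1 v (G.edge_sub e he hv))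

lemma vertex_nonneg {G : Hypergraph' α} {z : Finset α → ℝ} (hz : StdLin G z)
    {e : Finset α} {v : α} (he : e ∈ G.E) (hv : v ∈ e) : 0 ≤ z {v} :=
  le_trans (hz.2 e he).1 ((hz.2 e he).2.2 v hv)

lemma pair_nonpos {G : Hypergraph' α} {z : Finset α → ℝ} (hz : StdLin G z)
    {S : Finset α} {T : Finset (Finset α)} (hS : S ⊆ G.V) (hT : T ⊆ G.E) :
    (∑ v ∈ S, z {v}) + (∑ e ∈ T, z e) - (S.card : ℝ) - (T.card : ℝ) ≤ 0 := by
  have h1 : (∑ v ∈ S, z {v}) ≤ (S.card : ℝ) := by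
    calc (∑ v ∈ S, z {v}) ≤ ∑ v ∈ S, (1 : ℝ) :=
          Finset.sum_le_sum fun v hv => hz.1 v (hS hv)
      _ = (S.card : ℝ) := by simp
  have h2 : (∑ e ∈ T, z e) ≤ (T.card : ℝ) := by
    calc (∑ e ∈ T, z e) ≤ ∑ e ∈ T, (1 : ℝ) :=
          Finset.sum_le_sum fun e he => edge_le_one hz (hT he)
      _ = (T.card : ℝ) := by simp
  linarith

lemma certVal_le_one {G : Hypergraph' α} {z : Finset α → ℝ} (hz : StdLin G z)
    {S : Finset α} {T : Finset (Finset α)} (hS : S ⊆ G.V) (hT : T ⊆ G.E) :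
    certVal z S T ≤ 1 := by
  have := pair_nonpos hz hS hT
  unfold certVal; linarith

lemma certVal_le_vertex {G : Hypergraph' α} {z : Finset α → ℝ} (hz : StdLin G z)
    {S : Finset α} {T : Finset (Finset α)} {v : α} (hS : S ⊆ G.V) (hT : T ⊆ G.E)
    (hv : v ∈ S) : certVal z S T ≤ z {v} := by
  have h1 : z {v} + ∑ x ∈ S.erase v, z {x} = ∑ x ∈ S, z {x} :=
    Finset.add_sum_erase S (fun x => z {x}) hv
  have h2 : ((S.erase v).card : ℝ) + 1 = (S.card : ℝ) := by
    exact_mod_cast congrArg (fun n : ℕ => (n : ℝ)) (Finset.card_erase_add_one hv)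
  have h3 := pair_nonpos hz ((fun x hx => hS (Finset.mem_of_mem_erase hx)) : S.erase v ⊆ G.V) hT
  unfold certVal; linarith

lemma certVal_le_edgeVar {G : Hypergraph' α} {z : Finset α → ℝ} (hz : StdLin G z)
    {S : Finset α} {T : Finset (Finset α)} {i : Finset α} (hS : S ⊆ G.V) (hT : T ⊆ G.E)
    (hi : i ∈ T) : certVal z S T ≤ z i := by
  have h1 : z i + ∑ x ∈ T.erase i, z x = ∑ x ∈ T, z x :=
    Finset.add_sum_erase T z hi
  have h2 : ((T.erase i).card : ℝ) + 1 = (T.card : ℝ) := by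
    exact_mod_cast congrArg (fun n : ℕ => (n : ℝ)) (Finset.card_erase_add_one hi)
  have h3 := pair_nonpos hz hS ((fun x hx => hT (Finset.mem_of_mem_erase hx)) : T.erase i ⊆ G.E)
  unfold certVal; linarith

lemma certVal_superadd {G : Hypergraph' α} {z : Finset α → ℝ} (hz : StdLin G z)
    {S S' : Finset α} {T T' : Finset (Finset α)}
    (hS : S ⊆ G.V) (hS' : S' ⊆ G.V) (hT : T ⊆ G.E) (hT' : T' ⊆ G.E) :
    certVal z S T + certVal z S' T' - 1 ≤ certVal z (S ∪ S') (T ∪ T') := by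
  have h1 : (∑ v ∈ S ∪ S', z {v}) + (∑ v ∈ S ∩ S', z {v})
      = (∑ v ∈ S, z {v}) + (∑ v ∈ S', z {v}) := Finset.sum_union_inter
  have h2 : (∑ e ∈ T ∪ T', z e) + (∑ e ∈ T ∩ T', z e)
      = (∑ e ∈ T, z e) + (∑ e ∈ T', z e) := Finset.sum_union_inter
  have h3 : ((S ∪ S').card : ℝ) + ((S ∩ S').card : ℝ) = (S.card : ℝ) + (S'.card : ℝ) := by
    exact_mod_cast congrArg (fun n : ℕ => (n : ℝ)) (Finset.card_union_add_card_inter S S')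
  have h4 : ((T ∪ T').card : ℝ) + ((T ∩ T').card : ℝ) = (T.card : ℝ) + (T'.card : ℝ) := by
    exact_mod_cast congrArg (fun n : ℕ => (n : ℝ)) (Finset.card_union_add_card_inter T T')
  have h5 : (∑ v ∈ S ∩ S', z {v}) ≤ ((S ∩ S').card : ℝ) := by
    calc (∑ v ∈ S ∩ S', z {v}) ≤ ∑ v ∈ S ∩ S', (1 : ℝ) :=
          Finset.sum_le_sum fun v hv => hz.1 v (hS (Finset.mem_of_mem_inter_left hv))
      _ = _ := by simp
  have h6 : (∑ e ∈ T ∩ T', z e) ≤ ((T ∩ T').card : ℝ) := by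
    calc (∑ e ∈ T ∩ T', z e) ≤ ∑ e ∈ T ∩ T', (1 : ℝ) :=
          Finset.sum_le_sum fun e he => edge_le_one hz (hT (Finset.mem_of_mem_inter_left he))
      _ = _ := by simp
  unfold certVal; linarith

/-- Generalized flower inequality: no `γ ≥ 2` condition needed. -/
lemma genFlower {G : Hypergraph' α} {z : Finset α → ℝ} (hz : MPEF G z) :
    ∀ (n : ℕ) (T : Finset (Finset α)), T.card = n → (∀ i ∈ T, i ∈ G.E) →
      ∀ e ∈ G.E, e ∉ T → certVal z (e \ T.biUnion id) T ≤ z e := by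
  intro n
  induction n with
  | zero =>
    intro T hT hTE e he _
    rw [Finset.card_eq_zero] at hT
    subst hT
    have := (hz.1.2 e he).2.1
    simp only [certVal, Finset.biUnion_empty, Finset.sdiff_empty, Finset.sum_empty,
      Finset.card_empty, Nat.cast_zero]
    linarith
  | succ n IH =>
    intro T hT hTE e he heT
    by_cases hgood : ∀ i ∈ T, 2 ≤ ((e ∩ i) \ (T.erase i).biUnion (fun j => e ∩ j)).card
    · -- a valid extended flower inequality
      have hTne : T.Nonempty := Finset.card_pos.mp (by omega)
      have hvalid : ValidEFNeighbors G e T := by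
        refine ⟨hTne, fun i hi => ⟨hTE i hi, fun h => heT (h ▸ hi), ?_⟩, hgood⟩
        have h2 := hgood i hi
        have hne : ((e ∩ i) \ (T.erase i).biUnion (fun j => e ∩ j)).Nonempty :=
          Finset.card_pos.mp (by omega)
        obtain ⟨x, hx⟩ := hne
        have : x ∈ e ∩ i := (Finset.mem_sdiff.mp hx).1
        rw [Finset.inter_comm]
        exact ⟨x, this⟩
      have hfl := hz.2 e he T hvalid
      unfold ExtFlowerIneq at hfl
      unfold certVal
      linarith
    · push_neg at hgood
      obtain ⟨i, hiT, hlt⟩ := hgood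
      set T' := T.erase i with hT'def
      set R : Finset α := (e ∩ i) \ T'.biUnion id with hRdef
      have hRR : R = (e ∩ i) \ T'.biUnion (fun j => e ∩ j) := by
        ext x
        simp only [hRdef, Finset.mem_sdiff, Finset.mem_inter, Finset.mem_biUnion, id]
        constructor
        · rintro ⟨⟨hxe, hxi⟩, hn⟩
          exact ⟨⟨hxe, hxi⟩, fun ⟨j, hj, hxj⟩ => hn ⟨j, hj, hxj.2⟩⟩
        · rintro ⟨⟨hxe, hxi⟩, hn⟩
          exact ⟨⟨hxe, hxi⟩, fun ⟨j, hj, hxj⟩ => hn ⟨j, hj, hxe, hxj⟩⟩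
      have hRcard : R.card ≤ 1 := by rw [hRR]; exact Nat.lt_succ_iff.mp hlt
      have hA' : e \ T'.biUnion id = (e \ T.biUnion id) ∪ R := by
        ext x
        simp only [Finset.mem_sdiff, Finset.mem_union, Finset.mem_biUnion, id,
          Finset.mem_inter, hRdef]
        constructor
        · rintro ⟨hxe, hn⟩
          by_cases hxi : x ∈ i
          · exact Or.inr ⟨⟨hxe, hxi⟩, hn⟩
          · refine Or.inl ⟨hxe, fun ⟨j, hj, hxj⟩ => ?_⟩
            by_cases hji : j = i
            · exact hxi (hji ▸ hxj)
            · exact hn ⟨j, Finset.mem_erase.mpr ⟨hji, hj⟩, hxj⟩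
        · rintro (⟨hxe, hn⟩ | ⟨⟨hxe, _⟩, hn⟩)
          · exact ⟨hxe, fun ⟨j, hj, hxj⟩ => hn ⟨j, Finset.mem_of_mem_erase hj, hxj⟩⟩
          · exact ⟨hxe, hn⟩
      have hdisj : Disjoint (e \ T.biUnion id) R := by
        rw [Finset.disjoint_left]
        intro x hx hxR
        have hxi : x ∈ i := (Finset.mem_inter.mp (Finset.mem_sdiff.mp hxR).1).2
        exact (Finset.mem_sdiff.mp hx).2 (Finset.mem_biUnion.mpr ⟨i, hiT, hxi⟩)
      have hsum : ∑ v ∈ e \ T'.biUnion id, z {v}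
          = (∑ v ∈ e \ T.biUnion id, z {v}) + ∑ v ∈ R, z {v} := by
        rw [hA', Finset.sum_union hdisj]
      have hcard : ((e \ T'.biUnion id).card : ℝ)
          = ((e \ T.biUnion id).card : ℝ) + (R.card : ℝ) := by
        rw [hA']
        exact_mod_cast congrArg (fun n : ℕ => (n : ℝ)) (Finset.card_union_of_disjoint hdisj)
      have hTsum : z i + ∑ j ∈ T', z j = ∑ j ∈ T, z j := Finset.add_sum_erase T z hiT
      have hTcard : (T'.card : ℝ) + 1 = (T.card : ℝ) := by
        exact_mod_cast congrArg (fun n : ℕ => (n : ℝ)) (Finset.card_erase_add_one hiT)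
      have hT'n : T'.card = n := by
        have h := Finset.card_erase_add_one hiT
        rw [← hT'def] at h; omega
      have hIH := IH T' hT'n (fun j hj => hTE j (Finset.mem_of_mem_erase hj)) e he
        (fun h => heT (Finset.mem_of_mem_erase h))
      have hzi1 : z i ≤ 1 := edge_le_one hz.1 (hTE i hiT)
      rcases Nat.le_one_iff_eq_zero_or_eq_one.mp hRcard with hR | hR
      · have hRempty : R = ∅ := Finset.card_eq_zero.mp hR
        rw [hRempty] at hsum
        simp only [Finset.sum_empty, add_zero] at hsum
        rw [hR] at hcard
        unfold certVal at hIH ⊢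
        push_cast at hcard
        linarith
      · obtain ⟨u, hu⟩ := Finset.card_eq_one.mp hR
        have huR : u ∈ R := hu ▸ Finset.mem_singleton_self u
        have hui : u ∈ i := (Finset.mem_inter.mp (Finset.mem_sdiff.mp huR).1).2
        have hziu : z i ≤ z {u} := (hz.1.2 i (hTE i hiT)).2.2 u hui
        rw [hu] at hsum
        simp only [Finset.sum_singleton] at hsum
        rw [hR] at hcard
        unfold certVal at hIH ⊢
        push_cast at hcard
        linarith

/-- Main cover lemma: the value of any certificate covering an edge is at most
the edge variable. -/
lemma certVal_le_target {G : Hypergraph' α} {z : Finset α → ℝ} (hz : MPEF G z)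
    {e : Finset α} {S : Finset α} {T : Finset (Finset α)} (he : e ∈ G.E)
    (hS : S ⊆ G.V) (hT : T ⊆ G.E) (hcov : e ⊆ S ∪ T.biUnion id) :
    certVal z S T ≤ z e := by
  by_cases heT : e ∈ T
  · exact certVal_le_edgeVar hz.1 hS hT heT
  · have hsub : e \ T.biUnion id ⊆ S := by
      intro x hx
      rcases Finset.mem_union.mp (hcov (Finset.mem_sdiff.mp hx).1) with h | h
      · exact h
      · exact absurd h (Finset.mem_sdiff.mp hx).2
    have hstep : certVal z S T ≤ certVal z (e \ T.biUnion id) T := by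
      have h1 : (∑ v ∈ S \ (e \ T.biUnion id), z {v}) + ∑ v ∈ e \ T.biUnion id, z {v}
          = ∑ v ∈ S, z {v} := Finset.sum_sdiff hsub
      have h2 : ((S \ (e \ T.biUnion id)).card : ℝ) + ((e \ T.biUnion id).card : ℝ)
          = (S.card : ℝ) := by
        exact_mod_cast congrArg (fun n : ℕ => (n : ℝ))
          (Finset.card_sdiff_add_card_eq_card hsub)
      have h3 : (∑ v ∈ S \ (e \ T.biUnion id), z {v})
          ≤ ((S \ (e \ T.biUnion id)).card : ℝ) := by
        calc _ ≤ ∑ v ∈ S \ (e \ T.biUnion id), (1 : ℝ) :=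
              Finset.sum_le_sum fun v hv => hz.1.1 v (hS (Finset.mem_sdiff.mp hv).1)
          _ = _ := by simp
      unfold certVal; linarith
    exact le_trans hstep (genFlower hz T.card T rfl (fun i hi => hT hi) e he heT)

end ProofAux
section WDef

variable {α : Type*} [DecidableEq α]

/-- The set of certificates covering `g`. -/
def certs (G : Hypergraph' α) (g : Finset α) : Finset (Finset α × Finset (Finset α)) :=
  (G.V.powerset ×ˢ G.E.powerset).filter (fun p => g ⊆ p.1 ∪ p.2.biUnion id)

/-- The extension of `z` to all finsets used in the RMC. -/
noncomputable def W (G : Hypergraph' α) (z : Finset α → ℝ) (g : Finset α) : ℝ :=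
  if g ∈ G.E ∨ g.card ≤ 1 then z g
  else (certs G g).fold max 0 (fun p => certVal z p.1 p.2)

lemma W_singleton (G : Hypergraph' α) (z : Finset α → ℝ) (v : α) :
    W G z {v} = z {v} := by
  unfold W
  rw [if_pos (Or.inr (by simp))]

lemma W_edge (G : Hypergraph' α) (z : Finset α → ℝ) {e : Finset α} (he : e ∈ G.E) :
    W G z e = z e := by
  unfold W
  rw [if_pos (Or.inl he)]

lemma certVal_self_vertex (z : Finset α → ℝ) (v : α) : certVal z {v} ∅ = z {v} := by
  simp [certVal]

lemma certVal_self_edge (z : Finset α → ℝ) (e : Finset α) : certVal z ∅ {e} = z e := by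
  simp [certVal]

/-- Upper bounds on `W g` from upper bounds on certificate values. -/
lemma W_le {G : Hypergraph' α} {z : Finset α → ℝ} {g : Finset α}
    (hne : g.Nonempty) (hgV : g ⊆ G.V) {c : ℝ} (h0 : 0 ≤ c)
    (hub : ∀ S : Finset α, ∀ T : Finset (Finset α),
      S ⊆ G.V → T ⊆ G.E → g ⊆ S ∪ T.biUnion id → certVal z S T ≤ c) :
    W G z g ≤ c := by
  unfold W
  by_cases hgE : g ∈ G.E
  · rw [if_pos (Or.inl hgE)]
    have := hub ∅ {g} (Finset.empty_subset _) (by simpa using hgE)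
      (by simp [Finset.subset_union_right])
    rwa [certVal_self_edge] at this
  · by_cases hg1 : g.card ≤ 1
    · rw [if_pos (Or.inr hg1)]
      have hcard : g.card = 1 := le_antisymm hg1 (Finset.card_pos.mpr hne)
      obtain ⟨v, hv⟩ := Finset.card_eq_one.mp hcard
      subst hv
      have := hub {v} ∅ (by simpa using hgV) (Finset.empty_subset _)
        (by simp)
      rwa [certVal_self_vertex] at this
    · rw [if_neg (by push_neg; exact ⟨hgE, by omega⟩)]
      rw [Finset.fold_max_le]
      refine ⟨h0, fun p hp => ?_⟩
      rw [certs, Finset.mem_filter, Finset.mem_product] at hp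
      exact hub p.1 p.2 (Finset.mem_powerset.mp hp.1.1) (Finset.mem_powerset.mp hp.1.2) hp.2

/-- Lower bounds on `W g` from certificate values. -/
lemma W_ge {G : Hypergraph' α} {z : Finset α → ℝ} (hz : MPEF G z) {g : Finset α}
    (hne : g.Nonempty) {S : Finset α} {T : Finset (Finset α)}
    (hS : S ⊆ G.V) (hT : T ⊆ G.E) (hcov : g ⊆ S ∪ T.biUnion id) :
    certVal z S T ≤ W G z g := by
  unfold W
  by_cases hgE : g ∈ G.E
  · rw [if_pos (Or.inl hgE)]
    exact certVal_le_target hz hgE hS hT hcov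
  · by_cases hg1 : g.card ≤ 1
    · rw [if_pos (Or.inr hg1)]
      have hcard : g.card = 1 := le_antisymm hg1 (Finset.card_pos.mpr hne)
      obtain ⟨v, hv⟩ := Finset.card_eq_one.mp hcard
      subst hv
      rcases Finset.mem_union.mp (hcov (Finset.mem_singleton_self v)) with h | h
      · exact certVal_le_vertex hz.1 hS hT h
      · obtain ⟨i, hiT, hvi⟩ := Finset.mem_biUnion.mp h
        exact le_trans (certVal_le_edgeVar hz.1 hS hT hiT)
          ((hz.1.2 i (hT hiT)).2.2 v hvi)
    · rw [if_neg (by push_neg; exact ⟨hgE, by omega⟩)]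
      rw [Finset.le_fold_max]
      refine Or.inr ⟨(S, T), ?_, le_refl _⟩
      rw [certs, Finset.mem_filter, Finset.mem_product]
      exact ⟨⟨Finset.mem_powerset.mpr hS, Finset.mem_powerset.mpr hT⟩, hcov⟩

lemma W_nonneg {G : Hypergraph' α} {z : Finset α → ℝ} (hz : MPEF G z) {g : Finset α}
    (hne : g.Nonempty) (hcov : ∃ e ∈ G.E, g ⊆ e) : 0 ≤ W G z g := by
  unfold W
  by_cases hgE : g ∈ G.E
  · rw [if_pos (Or.inl hgE)]
    exact (hz.1.2 g hgE).1
  · by_cases hg1 : g.card ≤ 1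
    · rw [if_pos (Or.inr hg1)]
      have hcard : g.card = 1 := le_antisymm hg1 (Finset.card_pos.mpr hne)
      obtain ⟨v, hv⟩ := Finset.card_eq_one.mp hcard
      subst hv
      obtain ⟨e, he, hge⟩ := hcov
      exact vertex_nonneg hz.1 he (hge (Finset.mem_singleton_self v))
    · rw [if_neg (by push_neg; exact ⟨hgE, by omega⟩)]
      rw [Finset.le_fold_max]
      exact Or.inl le_rfl

lemma W_le_one {G : Hypergraph' α} {z : Finset α → ℝ} (hz : MPEF G z) {g : Finset α}
    (hne : g.Nonempty) (hgV : g ⊆ G.V) : W G z g ≤ 1 :=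
  W_le hne hgV zero_le_one fun _ _ hS hT _ => certVal_le_one hz.1 hS hT

/-- Anything reachable in the recursion is a subset of the starting edge. -/
lemma reach_subset {G : Hypergraph' α} (M : RMC G) {e f : Finset α}
    (h : Relation.ReflTransGen
      (fun a b => a ∈ G.E ∪ M.Ebar ∧ 2 ≤ b.card ∧ (b = M.J a ∨ b = M.K a)) e f) :
    f ⊆ e := by
  induction h with
  | refl => exact subset_rfl
  | tail _ hbc ih =>
    refine subset_trans ?_ ih
    obtain ⟨hb, _, hc⟩ := hbc
    have hu := M.union_eq _ hb
    rcases hc with rfl | rfl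
    · intro x hx; rw [← hu]; exact Finset.mem_union_left _ hx
    · intro x hx; rw [← hu]; exact Finset.mem_union_right _ hx

end WDef
/-- Proposition 2: the extended flower relaxation implies every recursive
McCormick relaxation: `MP^EF_G ⊆ MP^RMC_G`. -/
theorem MPEF_subset_MPRMC {α : Type*} [DecidableEq α]
    (G : Hypergraph' α) (M : RMC G) (z : Finset α → ℝ) (hz : MPEF G z) :
    M.MPRMC z := by
  refine ⟨W G z, fun v _ => W_singleton G z v, fun e he => W_edge G z he, ?_⟩
  intro f hf
  have hcov : ∃ e ∈ G.E, f ⊆ e := by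
    rcases Finset.mem_union.mp hf with h | h
    · exact ⟨f, h, subset_rfl⟩
    · obtain ⟨e, he, hr⟩ := M.reach f h
      exact ⟨e, he, reach_subset M hr⟩
  have hfV : f ⊆ G.V := by
    obtain ⟨e, he, hfe⟩ := hcov
    exact hfe.trans (G.edge_sub e he)
  have hJK := M.union_eq f hf
  have hJf : M.J f ⊆ f := by
    intro x hx; rw [← hJK]; exact Finset.mem_union_left _ hx
  have hKf : M.K f ⊆ f := by
    intro x hx; rw [← hJK]; exact Finset.mem_union_right _ hx
  have hJne := M.J_ne f hf
  have hKne := M.K_ne f hf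
  have hfne : f.Nonempty := hJne.mono hJf
  have hJV : M.J f ⊆ G.V := hJf.trans hfV
  have hKV : M.K f ⊆ G.V := hKf.trans hfV
  have hJcov : ∃ e ∈ G.E, M.J f ⊆ e := by
    obtain ⟨e, he, h⟩ := hcov; exact ⟨e, he, hJf.trans h⟩
  have hKcov : ∃ e ∈ G.E, M.K f ⊆ e := by
    obtain ⟨e, he, h⟩ := hcov; exact ⟨e, he, hKf.trans h⟩
  refine ⟨W_nonneg hz hfne hcov, ?_, ?_, ?_⟩
  · -- McCormick lower bound
    have key : W G z (M.J f) ≤ W G z f + 1 - W G z (M.K f) := by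
      refine W_le hJne hJV ?_ ?_
      · have h1 := W_le_one hz hKne hKV
        have h2 := W_nonneg hz hfne hcov
        linarith
      · intro S T hS hT hcovJ
        have key2 : W G z (M.K f) ≤ W G z f + 1 - certVal z S T := by
          refine W_le hKne hKV ?_ ?_
          · have h1 := certVal_le_one hz.1 hS hT
            have h2 := W_nonneg hz hfne hcov
            linarith
          · intro S' T' hS' hT' hcovK
            have hsup := certVal_superadd hz.1 hS hS' hT hT'
            have hcovf : f ⊆ (S ∪ S') ∪ (T ∪ T').biUnion id := by
              intro x hx
              rw [← hJK] at hx
              rcases Finset.mem_union.mp hx with hxJ | hxK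
              · rcases Finset.mem_union.mp (hcovJ hxJ) with h | h
                · exact Finset.mem_union_left _ (Finset.mem_union_left _ h)
                · obtain ⟨i, hi, hxi⟩ := Finset.mem_biUnion.mp h
                  exact Finset.mem_union_right _
                    (Finset.mem_biUnion.mpr ⟨i, Finset.mem_union_left _ hi, hxi⟩)
              · rcases Finset.mem_union.mp (hcovK hxK) with h | h
                · exact Finset.mem_union_left _ (Finset.mem_union_right _ h)
                · obtain ⟨i, hi, hxi⟩ := Finset.mem_biUnion.mp h
                  exact Finset.mem_union_right _
                    (Finset.mem_biUnion.mpr ⟨i, Finset.mem_union_right _ hi, hxi⟩)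
            have hge := W_ge hz hfne (Finset.union_subset hS hS')
              (Finset.union_subset hT hT') hcovf
            linarith
        linarith
    linarith
  · refine W_le hfne hfV (W_nonneg hz hJne hJcov) ?_
    intro S T hS hT hcovf
    exact W_ge hz hJne hS hT (hJf.trans hcovf)
  · refine W_le hfne hfV (W_nonneg hz hKne hKcov) ?_
    intro S T hS hT hcovf
    exact W_ge hz hKne hS hT (hKf.trans hcovf)
end
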